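/- With $P_j$ the hat-function projection on $[0,M]^d$, for every Lipschitz function $f$ the Lipschitz constant of $P_j f$ satisfies $\|P_j f\|_{Lip} \le 2^{d+1} d \|f\|_{Lip}$, with Lipschitz constants taken with respect to the $\ell^1$ norm. -/

import Mathlib

noncomputable def hatFn (t : ℝ) : ℝ := max (1 - |t|) 0

lemma hatFn_nonneg (t : ℝ) : 0 ≤ hatFn t := le_max_right _ _

lemma hatFn_le_one (t : ℝ) : hatFn t ≤ 1 := by
  unfold hatFn
  have := abs_nonneg t
  apply max_le <;> linarith

lemma hatFn_eq_zero {t : ℝ} (h : 1 ≤ |t|) : hatFn t = 0 := by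
  unfold hatFn
  apply max_eq_right; linarith

lemma hatFn_lip (s t : ℝ) : |hatFn s - hatFn t| ≤ |s - t| := by
  unfold hatFn
  have h1 := abs_sub_abs_le_abs_sub s t
  have h2 := abs_sub_abs_le_abs_sub t s
  rw [abs_sub_comm t s] at h2
  rw [abs_sub_le_iff]
  constructor <;>
  · rcases max_cases (1 - |s|) 0 with ⟨e1, f1⟩ | ⟨e1, f1⟩ <;>
      rcases max_cases (1 - |t|) 0 with ⟨e2, f2⟩ | ⟨e2, f2⟩ <;>
      rw [e1, e2] <;> have := abs_nonneg (s - t) <;> linarith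

/-- Partition of unity in one dimension. -/
lemma hat_sumA (N : ℕ) (hN : 0 < N) (u : ℝ) (h0 : 0 ≤ u) (h1 : u ≤ N) :
    ∑ m : Fin (N + 1), hatFn (u - m) = 1 := by
  set n : ℕ := min ⌊u⌋₊ (N - 1) with hn
  have hnN : n + 1 ≤ N := by
    have : n ≤ N - 1 := min_le_right _ _
    omega
  have hnu : (n : ℝ) ≤ u := by
    have : (n : ℝ) ≤ (⌊u⌋₊ : ℝ) := by exact_mod_cast min_le_left _ _
    have := Nat.floor_le h0
    linarith
  have hun : u ≤ (n : ℝ) + 1 := by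
    rcases le_or_gt (⌊u⌋₊) (N - 1) with h | h
    · have : n = ⌊u⌋₊ := min_eq_left h
      rw [this]
      have := Nat.lt_floor_add_one u
      push_cast at this ⊢
      linarith
    · have : n = N - 1 := min_eq_right (le_of_lt h)
      rw [this]
      have : ((N - 1 : ℕ) : ℝ) + 1 = N := by
        have : 1 ≤ N := hN
        push_cast [Nat.cast_sub this]
        ring
      linarith [this, h1]
  set m₁ : Fin (N + 1) := ⟨n, by omega⟩
  set m₂ : Fin (N + 1) := ⟨n + 1, by omega⟩
  have hne : m₁ ≠ m₂ := by simp [m₁, m₂, Fin.ext_iff]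
  have hsub : ({m₁, m₂} : Finset (Fin (N + 1))) ⊆ Finset.univ := Finset.subset_univ _
  rw [← Finset.sum_subset hsub (by
    intro m _ hm
    simp only [Finset.mem_insert, Finset.mem_singleton] at hm
    push_neg at hm
    obtain ⟨hm1, hm2⟩ := hm
    have hv1 : (m : ℕ) ≠ n := fun h => hm1 (Fin.ext (by simp [m₁, h]))
    have hv2 : (m : ℕ) ≠ n + 1 := fun h => hm2 (Fin.ext (by simp [m₂, h]))
    apply hatFn_eq_zero
    rcases lt_or_gt_of_ne hv1 with h | h
    · -- m < n
      have : (m : ℝ) + 1 ≤ (n : ℝ) := by exact_mod_cast h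
      rw [abs_of_nonneg (by linarith)]
      linarith
    · -- m ≥ n+2
      have : (n : ℝ) + 2 ≤ (m : ℝ) := by
        have : n + 2 ≤ (m : ℕ) := by omega
        exact_mod_cast this
      rw [abs_of_nonpos (by linarith)]
      linarith)]
  rw [Finset.sum_pair hne]
  have e1 : hatFn (u - m₁) = 1 - (u - n) := by
    unfold hatFn
    rw [show ((m₁ : Fin (N+1)) : ℝ) = (n : ℝ) by simp [m₁], abs_of_nonneg (by linarith)]
    apply max_eq_left; linarith
  have e2 : hatFn (u - m₂) = u - n := by
    unfold hatFn
    rw [show ((m₂ : Fin (N+1)) : ℝ) = (n : ℝ) + 1 by push_cast [m₂]; ring,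
      abs_of_nonpos (by linarith)]
    rw [show (1 - -(u - ((n:ℝ) + 1))) = u - n by ring]
    apply max_eq_left; linarith
  rw [e1, e2]; ring

lemma base_exists (N : ℕ) (hN : 0 < N) (u : ℝ) (h0 : 0 ≤ u) (h1 : u ≤ N) :
    ∃ n : ℕ, n + 1 ≤ N ∧ (n : ℝ) ≤ u ∧ u ≤ (n : ℝ) + 1 := by
  refine ⟨min ⌊u⌋₊ (N - 1), ?_, ?_, ?_⟩
  · have : min ⌊u⌋₊ (N - 1) ≤ N - 1 := min_le_right _ _
    omega
  · have h2 : ((min ⌊u⌋₊ (N - 1) : ℕ) : ℝ) ≤ (⌊u⌋₊ : ℝ) := by exact_mod_cast min_le_left _ _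
    have := Nat.floor_le h0
    linarith
  · rcases le_or_gt (⌊u⌋₊) (N - 1) with h | h
    · rw [min_eq_left h]
      have := Nat.lt_floor_add_one u
      linarith
    · rw [min_eq_right (le_of_lt h)]
      have : ((N - 1 : ℕ) : ℝ) + 1 = N := by
        have h1 : 1 ≤ N := hN
        push_cast [Nat.cast_sub h1]; ring
      linarith

lemma sum_ite_le (N : ℕ) (c : ℕ) (w : ℝ) (hw : 0 ≤ w) :
    ∑ m : Fin N, (if (m : ℕ) = c then w else 0) ≤ w := by
  by_cases h : c < N
  · have he : ∀ m : Fin N, ((m : ℕ) = c) = (m = ⟨c, h⟩) := by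
      intro m; simp [Fin.ext_iff]
    simp_rw [he]
    rw [Finset.sum_ite_eq' Finset.univ (⟨c, h⟩ : Fin N) (fun _ => w)]
    simp
  · have : ∀ m : Fin N, (if (m : ℕ) = c then w else 0) = 0 := by
      intro m
      rw [if_neg]; omega
    simp [this]
    exact hw

lemma nat_abs_le_one_of_lt_two {a b : ℕ} (h : |(a : ℝ) - b| < 2) : |(a : ℝ) - b| ≤ 1 := by
  have key : |(a : ℝ) - b| = ((|(a : ℤ) - b| : ℤ) : ℝ) := by push_cast; ring_nf
  rw [key] at h ⊢
  have h2 : |(a : ℤ) - (b : ℤ)| < 2 := by exact_mod_cast h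
  have h3 : |(a : ℤ) - (b : ℤ)| ≤ 1 := by omega
  exact_mod_cast h3

lemma hat_sumB (N : ℕ) (hN : 0 < N) (u v : ℝ) (h0 : 0 ≤ u) (huv : u ≤ v) (h1 : v ≤ N) :
    ∃ n : Fin (N + 1), ∑ m : Fin (N + 1),
      |(m : ℝ) - (n : ℝ)| * |hatFn (u - m) - hatFn (v - m)| ≤ 4 * (v - u) := by
  obtain ⟨n, hnN, hnu, hun⟩ := base_exists N hN u h0 (le_trans huv h1)
  refine ⟨⟨n, by omega⟩, ?_⟩
  have hcoe : ((⟨n, by omega⟩ : Fin (N + 1)) : ℝ) = (n : ℝ) := rfl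
  simp only [hcoe]
  rcases le_or_gt (v - u) 1 with hc | hc
  · -- small case
    have hterm : ∀ m : Fin (N + 1),
        |(m : ℝ) - n| * |hatFn (u - m) - hatFn (v - m)| ≤
          (if (m : ℕ) = n + 1 then (v - u) else 0) +
            (if (m : ℕ) = n + 2 then 2 * (v - u) else 0) := by
      intro m
      by_cases e1 : (m : ℕ) = n + 1
      · have hm : (m : ℝ) = (n : ℝ) + 1 := by rw [show ((m:Fin (N+1)):ℝ) = (((m:ℕ)):ℝ) from rfl, e1]; push_cast; ring
        rw [if_pos e1, if_neg (by omega)]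
        have hw : |(m : ℝ) - n| = 1 := by rw [hm]; simp
        rw [hw, one_mul]
        have := hatFn_lip (u - m) (v - m)
        have h2 : |u - (m:ℝ) - (v - m)| = v - u := by
          rw [show u - (m:ℝ) - (v - m) = u - v by ring, abs_of_nonpos (by linarith)]; ring
        linarith
      by_cases e2 : (m : ℕ) = n + 2
      · have hm : (m : ℝ) = (n : ℝ) + 2 := by rw [show ((m:Fin (N+1)):ℝ) = (((m:ℕ)):ℝ) from rfl, e2]; push_cast; ring
        rw [if_neg e1, if_pos e2]
        have hw : |(m : ℝ) - n| = 2 := by rw [hm]; simp [abs_of_nonneg]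
        have hz : hatFn (u - m) = 0 := by
          apply hatFn_eq_zero
          rw [hm, abs_of_nonpos (by linarith)]
          linarith
        have hb : hatFn (v - m) ≤ v - u := by
          unfold hatFn
          apply max_le
          · rw [hm, abs_of_nonpos (by linarith)]; linarith
          · linarith
        rw [hw, hz]
        have h3 : |0 - hatFn (v - m)| = hatFn (v - m) := by
          rw [abs_of_nonpos (by simpa using hatFn_nonneg _)]; ring
        rw [h3]
        linarith
      · rw [if_neg e1, if_neg e2]
        rcases lt_trichotomy ((m : ℕ)) n with h | h | h
        · have hm : (m : ℝ) + 1 ≤ (n : ℝ) := by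
            have : (m : ℕ) + 1 ≤ n := h
            exact_mod_cast this
          have hz1 : hatFn (u - m) = 0 := hatFn_eq_zero (by rw [abs_of_nonneg (by linarith)]; linarith)
          have hz2 : hatFn (v - m) = 0 := hatFn_eq_zero (by rw [abs_of_nonneg (by linarith)]; linarith)
          rw [hz1, hz2]; simp
        · have : |(m : ℝ) - n| = 0 := by
            rw [show ((m:Fin (N+1)):ℝ) = (((m:ℕ)):ℝ) from rfl, h]; simp
          rw [this, zero_mul]; norm_num
        · have h3 : n + 3 ≤ (m : ℕ) := by omega
          have hm : (n : ℝ) + 3 ≤ (m : ℝ) := by exact_mod_cast h3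
          have hz1 : hatFn (u - m) = 0 := hatFn_eq_zero (by rw [abs_of_nonpos (by linarith)]; linarith)
          have hz2 : hatFn (v - m) = 0 := hatFn_eq_zero (by rw [abs_of_nonpos (by linarith)]; linarith)
          rw [hz1, hz2]; simp
    calc ∑ m : Fin (N + 1), |(m : ℝ) - n| * |hatFn (u - m) - hatFn (v - m)|
        ≤ ∑ m : Fin (N + 1), ((if (m : ℕ) = n + 1 then (v - u) else 0) +
            (if (m : ℕ) = n + 2 then 2 * (v - u) else 0)) := Finset.sum_le_sum (fun m _ => hterm m)
      _ = (∑ m : Fin (N + 1), (if (m : ℕ) = n + 1 then (v - u) else 0)) +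
            ∑ m : Fin (N + 1), (if (m : ℕ) = n + 2 then 2 * (v - u) else 0) :=
          Finset.sum_add_distrib
      _ ≤ (v - u) + 2 * (v - u) := by
          gcongr
          · exact sum_ite_le _ _ _ (by linarith)
          · exact sum_ite_le _ _ _ (by linarith)
      _ ≤ 4 * (v - u) := by linarith
  · -- large case
    have hAu := hat_sumA N hN u h0 (le_trans huv h1)
    have hAv := hat_sumA N hN v (le_trans h0 huv) h1
    have hterm : ∀ m : Fin (N + 1),
        |(m : ℝ) - n| * |hatFn (u - m) - hatFn (v - m)| ≤
          1 * hatFn (u - m) + (3 * (v - u)) * hatFn (v - m) := by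
      intro m
      have hau := hatFn_nonneg (u - m)
      have hav := hatFn_nonneg (v - m)
      have h2 : |hatFn (u - m) - hatFn (v - m)| ≤ hatFn (u - m) + hatFn (v - m) := by
        rw [abs_sub_le_iff]; constructor <;> linarith
      have h3 : |(m : ℝ) - n| * |hatFn (u - m) - hatFn (v - m)| ≤
          |(m : ℝ) - n| * hatFn (u - m) + |(m : ℝ) - n| * hatFn (v - m) := by
        rw [← mul_add]
        exact mul_le_mul_of_nonneg_left h2 (abs_nonneg _)
      have c1 : |(m : ℝ) - n| * hatFn (u - m) ≤ 1 * hatFn (u - m) := by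
        by_cases hz : 1 ≤ |u - (m : ℝ)|
        · rw [hatFn_eq_zero hz]; simp
        · push_neg at hz
          have h5 : |(m:ℝ) - u| < 1 := by rwa [abs_sub_comm]
          have h7 : |u - (n:ℝ)| ≤ 1 := by rw [abs_of_nonneg (by linarith)]; linarith
          have this : |(m : ℝ) - n| < 2 := by
            calc |(m : ℝ) - n| = |((m:ℝ) - u) + (u - (n:ℝ))| := by ring_nf
              _ ≤ |(m:ℝ) - u| + |u - (n:ℝ)| := abs_add_le _ _
              _ < 2 := by linarith
          exact mul_le_mul_of_nonneg_right
            (nat_abs_le_one_of_lt_two (a := (m:ℕ)) (b := n) (by exact_mod_cast this)) hau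
      have c2 : |(m : ℝ) - n| * hatFn (v - m) ≤ (3 * (v - u)) * hatFn (v - m) := by
        by_cases hz : 1 ≤ |v - (m : ℝ)|
        · rw [hatFn_eq_zero hz]; simp
        · push_neg at hz
          have h5 : |(m:ℝ) - v| < 1 := by rwa [abs_sub_comm]
          have h8 : |(m : ℝ) - n| ≤ 3 * (v - u) := by
            have t1 : (m:ℝ) - n ≤ 3 * (v - u) := by
              have := abs_lt.mp h5
              linarith [abs_lt.mp h5]
            have t2 : -(3 * (v - u)) ≤ (m:ℝ) - n := by
              have := abs_lt.mp h5
              linarith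
            rw [abs_le]; exact ⟨t2, t1⟩
          exact mul_le_mul_of_nonneg_right h8 hav
      linarith
    calc ∑ m : Fin (N + 1), |(m : ℝ) - n| * |hatFn (u - m) - hatFn (v - m)|
        ≤ ∑ m : Fin (N + 1), (1 * hatFn (u - m) + (3 * (v - u)) * hatFn (v - m)) :=
          Finset.sum_le_sum (fun m _ => hterm m)
      _ = 1 * (∑ m : Fin (N + 1), hatFn (u - m)) +
            (3 * (v - u)) * ∑ m : Fin (N + 1), hatFn (v - m) := by
          rw [Finset.sum_add_distrib, Finset.mul_sum, Finset.mul_sum]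
      _ = 1 + 3 * (v - u) := by rw [hAu, hAv]; ring
      _ ≤ 4 * (v - u) := by linarith

lemma hat_sumB' (N : ℕ) (hN : 0 < N) (u v : ℝ) (h0u : 0 ≤ u) (h1u : u ≤ N)
    (h0v : 0 ≤ v) (h1v : v ≤ N) :
    ∃ n : Fin (N + 1), ∑ m : Fin (N + 1),
      |(m : ℝ) - (n : ℝ)| * |hatFn (u - m) - hatFn (v - m)| ≤ 4 * |u - v| := by
  rcases le_total u v with h | h
  · obtain ⟨n, hn⟩ := hat_sumB N hN u v h0u h h1v
    exact ⟨n, by rwa [abs_of_nonpos (by linarith), neg_sub]⟩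
  · obtain ⟨n, hn⟩ := hat_sumB N hN v u h0v h h1u
    refine ⟨n, ?_⟩
    rw [abs_of_nonneg (by linarith)]
    calc ∑ m : Fin (N + 1), |(m : ℝ) - (n : ℝ)| * |hatFn (u - m) - hatFn (v - m)|
        = ∑ m : Fin (N + 1), |(m : ℝ) - (n : ℝ)| * |hatFn (v - m) - hatFn (u - m)| := by
          apply Finset.sum_congr rfl; intro m _; rw [abs_sub_comm (hatFn (u - m))]
      _ ≤ 4 * (u - v) := hn

lemma abs_telescope (h : ℕ → ℝ) (n : ℕ) :
    |h 0 - h n| ≤ ∑ t ∈ Finset.range n, |h t - h (t + 1)| := by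
  induction n with
  | zero => simp
  | succ n ih =>
      rw [Finset.sum_range_succ]
      calc |h 0 - h (n + 1)| ≤ |h 0 - h n| + |h n - h (n + 1)| := abs_sub_le _ _ _
        _ ≤ _ := by linarith

lemma hatFn_def (t : ℝ) : hatFn t = max (1 - |t|) 0 := rfl

attribute [irreducible] hatFn

set_option maxHeartbeats 1000000 in
lemma step_lemma (d j : ℕ) (hj : 0 < j) (M : ℝ) (hM : 0 < M)
    (f : (Fin d → ℝ) → ℝ) (K : ℝ) (hK : 0 ≤ K)
    (hfLip : ∀ x y, |f x - f y| ≤ K * ∑ i, |x i - y i|)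
    (u w : Fin d → ℝ) (hu : ∀ i, u i ∈ Set.Icc (0:ℝ) M) (hw : ∀ i, w i ∈ Set.Icc (0:ℝ) M)
    (i₀ : Fin d) (heq : ∀ i, i ≠ i₀ → u i = w i) :
    |(∑ k : Fin d → Fin (j + 1), f (fun i => (k i : ℝ) * (M / j)) *
        ∏ i, hatFn (u i * (j / M) - k i))
      - ∑ k : Fin d → Fin (j + 1), f (fun i => (k i : ℝ) * (M / j)) *
        ∏ i, hatFn (w i * (j / M) - k i)|
      ≤ 4 * K * |u i₀ - w i₀| := by
  have hj0 : (0:ℝ) < j := by exact_mod_cast hj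
  have hjM : 0 < (j:ℝ) / M := by positivity
  have hscale : ∀ z : Fin d → ℝ, (∀ i, z i ∈ Set.Icc (0:ℝ) M) →
      ∀ i, 0 ≤ z i * (j / M) ∧ z i * (j / M) ≤ j := by
    intro z hz i
    obtain ⟨hz0, hz1⟩ := hz i
    constructor
    · positivity
    · calc z i * (j / M) ≤ M * (j / M) := by gcongr
        _ = j := by field_simp
  -- the base index from sumB'
  obtain ⟨n₀, hn₀⟩ := hat_sumB' j hj (u i₀ * (j / M)) (w i₀ * (j / M))
    (hscale u hu i₀).1 (hscale u hu i₀).2 (hscale w hw i₀).1 (hscale w hw i₀).2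
  -- notation
  set e := Equiv.funSplitAt i₀ (Fin (j + 1)) with he
  set pt : (Fin d → Fin (j + 1)) → (Fin d → ℝ) := fun k i => (k i : ℝ) * (M / j) with hpt
  set a : Fin (j + 1) → ℝ := fun m => hatFn (u i₀ * (j / M) - m) with ha
  set b : Fin (j + 1) → ℝ := fun m => hatFn (w i₀ * (j / M) - m) with hb
  set P : ({ i // i ≠ i₀ } → Fin (j + 1)) → ℝ :=
    fun k' => ∏ i' : { i // i ≠ i₀ }, hatFn (u i'.val * (j / M) - k' i') with hP
  set g : Fin (j + 1) → ({ i // i ≠ i₀ } → Fin (j + 1)) → ℝ :=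
    fun m k' => f (pt (e.symm (m, k'))) with hg
  have hesymm : ∀ (m : Fin (j+1)) (k' : { i // i ≠ i₀ } → Fin (j + 1)) (i : Fin d),
      e.symm (m, k') i = if h : i = i₀ then m else k' ⟨i, h⟩ := by
    intro m k' i
    simp [he, Equiv.funSplitAt, Equiv.piSplitAt]
  have hesymm0 : ∀ (m : Fin (j+1)) (k' : { i // i ≠ i₀ } → Fin (j + 1)),
      e.symm (m, k') i₀ = m := by intro m k'; rw [hesymm]; simp
  have hesymm1 : ∀ (m : Fin (j+1)) (k' : { i // i ≠ i₀ } → Fin (j + 1))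
      (i : Fin d) (h : i ≠ i₀), e.symm (m, k') i = k' ⟨i, h⟩ := by
    intro m k' i h; rw [hesymm]; simp [h]
  -- split a product over Fin d at i₀
  have hsplit : ∀ G : Fin d → ℝ, ∏ i, G i = G i₀ * ∏ i' : { i // i ≠ i₀ }, G i'.val := by
    intro G
    rw [← Finset.mul_prod_erase Finset.univ G (Finset.mem_univ i₀)]
    congr 1
    exact Finset.prod_subtype (Finset.univ.erase i₀) (by simp) G
  -- reindexed sums
  have h1 : ∀ z : Fin d → ℝ, (∀ i, i ≠ i₀ → z i = u i) →
      (∑ k : Fin d → Fin (j + 1), f (pt k) * ∏ i, hatFn (z i * (j / M) - k i)) =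
      ∑ k' : { i // i ≠ i₀ } → Fin (j + 1), ∑ m : Fin (j + 1),
        g m k' * (hatFn (z i₀ * (j / M) - m) * P k') := by
    intro z hz
    rw [← Equiv.sum_comp e.symm
      (fun k => f (pt k) * ∏ i, hatFn (z i * (j / M) - k i)), Fintype.sum_prod_type,
      Finset.sum_comm]
    refine Finset.sum_congr rfl fun k' _ => Finset.sum_congr rfl fun m _ => ?_
    rw [hsplit (fun i => hatFn (z i * (j / M) - e.symm (m, k') i))]
    congr 1
    congr 1
    · rw [hesymm0]
    · refine Finset.prod_congr rfl fun i' _ => ?_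
      rw [hesymm1 m k' i'.val i'.prop, hz i'.val i'.prop]
  have h1u := h1 u (fun i _ => rfl)
  have h1w := h1 w (fun i hi => (heq i hi).symm)
  -- partition of unity facts
  have hSa : ∑ m : Fin (j + 1), a m = 1 :=
    hat_sumA j hj _ (hscale u hu i₀).1 (hscale u hu i₀).2
  have hSb : ∑ m : Fin (j + 1), b m = 1 :=
    hat_sumA j hj _ (hscale w hw i₀).1 (hscale w hw i₀).2
  have hSP : ∑ k' : { i // i ≠ i₀ } → Fin (j + 1), P k' = 1 := by
    calc (∑ k' : { i // i ≠ i₀ } → Fin (j + 1), P k')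
        = ∏ i' : { i // i ≠ i₀ }, ∑ m : Fin (j + 1), hatFn (u i'.val * (↑j / M) - (m:ℝ)) :=
          (Fintype.prod_sum
            (fun (i' : { i // i ≠ i₀ }) (m : Fin (j + 1)) =>
              hatFn (u i'.val * (↑j / M) - (m:ℝ)))).symm
      _ = 1 := by
          rw [show (1:ℝ) = ∏ i' : { i // i ≠ i₀ }, 1 by simp]
          refine Finset.prod_congr rfl fun i' _ => ?_
          exact hat_sumA j hj _ (hscale u hu i'.val).1 (hscale u hu i'.val).2
  -- key identity
  have key : (∑ k : Fin d → Fin (j + 1), f (pt k) * ∏ i, hatFn (u i * (j / M) - k i))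
      - (∑ k : Fin d → Fin (j + 1), f (pt k) * ∏ i, hatFn (w i * (j / M) - k i))
      = ∑ k' : { i // i ≠ i₀ } → Fin (j + 1), ∑ m : Fin (j + 1),
          (g m k' - g n₀ k') * ((a m - b m) * P k') := by
    rw [h1u, h1w, ← Finset.sum_sub_distrib]
    refine Finset.sum_congr rfl fun k' _ => ?_
    have expand : ∀ m : Fin (j + 1),
        (g m k' - g n₀ k') * ((a m - b m) * P k') =
          (g m k' * (a m * P k') - g m k' * (b m * P k'))
            - ((g n₀ k' * P k') * a m - (g n₀ k' * P k') * b m) := by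
      intro m; ring
    rw [Finset.sum_congr rfl (fun m _ => expand m), Finset.sum_sub_distrib,
      Finset.sum_sub_distrib, Finset.sum_sub_distrib, ← Finset.mul_sum, ← Finset.mul_sum,
      hSa, hSb]
    ring
  rw [key]
  -- Lipschitz bound on g differences
  have hgLip : ∀ (m : Fin (j + 1)) (k' : { i // i ≠ i₀ } → Fin (j + 1)),
      |g m k' - g n₀ k'| ≤ K * ((M / j) * |(m : ℝ) - (n₀ : ℝ)|) := by
    intro m k'
    have := hfLip (pt (e.symm (m, k'))) (pt (e.symm (n₀, k')))
    have hsum : ∑ i, |pt (e.symm (m, k')) i - pt (e.symm (n₀, k')) i| =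
        (M / j) * |(m : ℝ) - (n₀ : ℝ)| := by
      rw [Finset.sum_eq_single i₀]
      · rw [hpt]
        simp only
        rw [hesymm0, hesymm0,
          show ((m:Fin (j+1)):ℝ) * (M / j) - ((n₀:Fin (j+1)):ℝ) * (M / j)
            = ((m:ℝ) - (n₀:ℝ)) * (M / j) by ring, abs_mul,
          abs_of_pos (by positivity : (0:ℝ) < M / j)]
        ring
      · intro i _ hi
        rw [hpt]
        simp only
        rw [hesymm1 m k' i hi, hesymm1 n₀ k' i hi]
        simp
      · intro h; exact absurd (Finset.mem_univ i₀) h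
    calc |g m k' - g n₀ k'| ≤ K * ∑ i, |pt (e.symm (m, k')) i - pt (e.symm (n₀, k')) i| := this
      _ = K * ((M / j) * |(m : ℝ) - (n₀ : ℝ)|) := by rw [hsum]
  -- final estimate
  have hPnn : ∀ k', 0 ≤ P k' := fun k' => Finset.prod_nonneg fun i' _ => hatFn_nonneg _
  calc |∑ k' : { i // i ≠ i₀ } → Fin (j + 1), ∑ m : Fin (j + 1),
          (g m k' - g n₀ k') * ((a m - b m) * P k')|
      ≤ ∑ k' : { i // i ≠ i₀ } → Fin (j + 1), ∑ m : Fin (j + 1),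
          |g m k' - g n₀ k'| * (|a m - b m| * P k') := by
        refine (Finset.abs_sum_le_sum_abs _ _).trans ?_
        refine Finset.sum_le_sum fun k' _ => ?_
        refine (Finset.abs_sum_le_sum_abs _ _).trans ?_
        refine Finset.sum_le_sum fun m _ => ?_
        rw [abs_mul, abs_mul, abs_of_nonneg (hPnn k')]
    _ ≤ ∑ k' : { i // i ≠ i₀ } → Fin (j + 1), ∑ m : Fin (j + 1),
          (K * ((M / j) * |(m : ℝ) - (n₀ : ℝ)|)) * (|a m - b m| * P k') := by
        refine Finset.sum_le_sum fun k' _ => Finset.sum_le_sum fun m _ => ?_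
        have h0 : 0 ≤ |a m - b m| * P k' := mul_nonneg (abs_nonneg _) (hPnn k')
        exact mul_le_mul_of_nonneg_right (hgLip m k') h0
    _ = (K * (M / j)) * (∑ m : Fin (j + 1), |(m : ℝ) - (n₀ : ℝ)| * |a m - b m|) *
          (∑ k' : { i // i ≠ i₀ } → Fin (j + 1), P k') := by
        rw [Finset.mul_sum]
        refine Finset.sum_congr rfl fun k' _ => ?_
        rw [Finset.mul_sum, Finset.sum_mul]
        refine Finset.sum_congr rfl fun m _ => ?_
        ring
    _ ≤ (K * (M / j)) * (4 * |u i₀ * (j / M) - w i₀ * (j / M)|) * 1 := by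
        rw [hSP]
        have hc : 0 ≤ K * (M / j) := by positivity
        gcongr
    _ = 4 * K * |u i₀ - w i₀| := by
        rw [show u i₀ * (j / M) - w i₀ * (j / M) = (u i₀ - w i₀) * (j / M) by ring,
          abs_mul, abs_of_pos hjM]
        field_simp

/-- Lipschitz bound for the hat-function projection:
`‖P_j f‖_{Lip} ≤ 2^{d+1} d ‖f‖_{Lip}`, with Lipschitz constants taken with respect to
the `ℓ¹` norm on `[0,M]^d`. -/
theorem stmt11
    (d j : ℕ) (hd : 0 < d) (hj : 0 < j) (M : ℝ) (hM : 0 < M)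
    (χ : ℝ → ℝ) (hχ : ∀ t, χ t = max (1 - |t|) 0)
    (φ : (Fin d → Fin (j + 1)) → (Fin d → ℝ) → ℝ)
    (hφ : ∀ k x, φ k x = ∏ i, χ ((j / M) * (x i - (k i : ℝ) * (M / j))))
    (f : (Fin d → ℝ) → ℝ) (K : ℝ)
    (hfLip : ∀ x y, |f x - f y| ≤ K * ∑ i, |x i - y i|)
    (x y : Fin d → ℝ) (hx : ∀ i, x i ∈ Set.Icc (0:ℝ) M) (hy : ∀ i, y i ∈ Set.Icc (0:ℝ) M) :
    |(∑ k : Fin d → Fin (j + 1), f (fun i => (k i : ℝ) * (M / j)) * φ k x)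
        - ∑ k : Fin d → Fin (j + 1), f (fun i => (k i : ℝ) * (M / j)) * φ k y|
      ≤ 2 ^ (d + 1) * d * K * ∑ i, |x i - y i| := by
  have hj0 : (0:ℝ) < j := by exact_mod_cast hj
  have hd0 : (0:ℝ) < d := by exact_mod_cast hd
  -- K is nonnegative
  have hK : 0 ≤ K := by
    have h := hfLip (fun _ => 0) (fun _ => 1)
    have hs : ∑ i : Fin d, |(fun _ => (0:ℝ)) i - (fun _ => (1:ℝ)) i| = d := by
      simp
    rw [hs] at h
    nlinarith [abs_nonneg (f (fun _ => (0:ℝ)) - f (fun _ => (1:ℝ)))]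
  -- rewrite φ in terms of hatFn
  have hφ' : ∀ (k : Fin d → Fin (j + 1)) (z : Fin d → ℝ),
      φ k z = ∏ i, hatFn (z i * (↑j / M) - (k i : ℝ)) := by
    intro k z
    rw [hφ]
    refine Finset.prod_congr rfl fun i _ => ?_
    rw [hχ, ← hatFn_def]
    congr 1
    field_simp
  -- abbreviation for the projection
  set g : (Fin d → ℝ) → ℝ := fun v => ∑ k : Fin d → Fin (j + 1),
    f (fun i => (k i : ℝ) * (M / j)) * ∏ i, hatFn (v i * (↑j / M) - (k i : ℝ)) with hgdef
  have hgx : (∑ k : Fin d → Fin (j + 1), f (fun i => (k i : ℝ) * (M / j)) * φ k x) = g x :=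
    Finset.sum_congr rfl fun k _ => by rw [hφ']
  have hgy : (∑ k : Fin d → Fin (j + 1), f (fun i => (k i : ℝ) * (M / j)) * φ k y) = g y :=
    Finset.sum_congr rfl fun k _ => by rw [hφ']
  rw [hgx, hgy]
  -- telescoping sequence
  set z : ℕ → Fin d → ℝ := fun t i => if (i : ℕ) < t then y i else x i with hzdef
  have hz0 : z 0 = x := funext fun i => by simp [hzdef]
  have hzd : z d = y := funext fun i => by simp [hzdef, i.isLt]
  have hzIcc : ∀ t i, z t i ∈ Set.Icc (0:ℝ) M := by
    intro t i
    by_cases h : (i : ℕ) < t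
    · simpa [hzdef, h] using hy i
    · simpa [hzdef, h] using hx i
  -- per-step bound
  have hstep : ∀ t ∈ Finset.range d, |g (z t) - g (z (t + 1))| ≤
      (fun t => if h : t < d then 4 * K * |x ⟨t, h⟩ - y ⟨t, h⟩| else 0) t := by
    intro t ht
    have htd : t < d := Finset.mem_range.mp ht
    simp only [dif_pos htd]
    have heq : ∀ i : Fin d, i ≠ ⟨t, htd⟩ → z t i = z (t + 1) i := by
      intro i hi
      have hv : (i : ℕ) ≠ t := by
        intro h; exact hi (Fin.ext h)
      simp only [hzdef]
      by_cases h : (i : ℕ) < t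
      · rw [if_pos h, if_pos (by omega)]
      · rw [if_neg h, if_neg (by omega)]
    have := step_lemma d j hj M hM f K hK hfLip (z t) (z (t + 1))
      (hzIcc t) (hzIcc (t + 1)) ⟨t, htd⟩ heq
    have hval : z t ⟨t, htd⟩ = x ⟨t, htd⟩ := by simp [hzdef]
    have hval' : z (t + 1) ⟨t, htd⟩ = y ⟨t, htd⟩ := by simp [hzdef]
    rw [hval, hval'] at this
    exact this
  calc |g x - g y| = |g (z 0) - g (z d)| := by rw [hz0, hzd]
    _ ≤ ∑ t ∈ Finset.range d, |g (z t) - g (z (t + 1))| := abs_telescope (fun t => g (z t)) d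
    _ ≤ ∑ t ∈ Finset.range d,
        (fun t => if h : t < d then 4 * K * |x ⟨t, h⟩ - y ⟨t, h⟩| else 0) t :=
      Finset.sum_le_sum hstep
    _ = ∑ i : Fin d, 4 * K * |x i - y i| := by
      rw [← Fin.sum_univ_eq_sum_range]
      refine Finset.sum_congr rfl fun i _ => ?_
      simp only [dif_pos i.isLt]
    _ = 4 * K * ∑ i, |x i - y i| := by rw [Finset.mul_sum]
    _ ≤ 2 ^ (d + 1) * d * K * ∑ i, |x i - y i| := by
      have hS : 0 ≤ ∑ i, |x i - y i| := Finset.sum_nonneg fun i _ => abs_nonneg _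
      have h4 : (4:ℝ) ≤ 2 ^ (d + 1) * d := by
        have h2 : (2:ℝ) ^ 2 ≤ 2 ^ (d + 1) := by
          apply pow_le_pow_right₀ one_le_two
          omega
        have h1 : (1:ℝ) ≤ d := by exact_mod_cast hd
        nlinarith
      have := mul_le_mul_of_nonneg_right
        (mul_le_mul_of_nonneg_right h4 hK) hS
      linarith [this]
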